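/- On the domain D = { (a,s) : φ_a(s) < +∞ }, the partial derivative ∂φ_a(s)/∂s is strictly positive. -/

import Mathlib

open Set

/-- `u c s` is the solution of `-(p·u')' + q·u = c·w·u` with `u c s s = 0` and
`(u c s)' s = 1/(p s)`; `u'` is its `t`-derivative. -/
def IsSolFamily (p q w : ℝ → ℝ) (u u' : ℝ → ℝ → ℝ → ℝ) : Prop :=
  ∀ c s : ℝ, u c s s = 0 ∧ u' c s s = 1 / p s ∧
    ∀ t : ℝ, HasDerivAt (u c s) (u' c s t) t ∧
      HasDerivAt (fun τ => p τ * u' c s τ) (q t * u c s t - c * w t * u c s t) t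

/-- Zero set of `u c s` strictly after `s`. -/
def zeroSet (u : ℝ → ℝ → ℝ → ℝ) (c s : ℝ) : Set ℝ := {t | s < t ∧ u c s t = 0}

open Filter Topology

section Aux

/-- If `f x = 0` and `f` has positive derivative at `x`, then `f` is positive just
to the right of `x`. -/
lemma aux_eventually_pos_right {f : ℝ → ℝ} {x L : ℝ} (hf : HasDerivAt f L x)
    (hfx : f x = 0) (hL : 0 < L) : ∀ᶠ t in 𝓝[>] x, 0 < f t := by
  have hslope : Tendsto (slope f x) (𝓝[≠] x) (𝓝 L) := hasDerivAt_iff_tendsto_slope.1 hf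
  have hev : ∀ᶠ t in 𝓝[≠] x, 0 < slope f x t := hslope.eventually (eventually_gt_nhds hL)
  have hmono : 𝓝[>] x ≤ 𝓝[≠] x := nhdsWithin_mono x fun t ht => ne_of_gt ht
  filter_upwards [hev.filter_mono hmono, self_mem_nhdsWithin] with t ht hts
  have hts' : (0:ℝ) < t - x := sub_pos.2 hts
  rw [slope_def_field, hfx, sub_zero] at ht
  have := mul_pos ht hts'
  rwa [div_mul_cancel₀ _ (ne_of_gt hts')] at this

/-- If `f x = 0` and `f` has negative derivative at `x`, then `f` is negative just
to the right of `x`. -/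
lemma aux_eventually_neg_right {f : ℝ → ℝ} {x L : ℝ} (hf : HasDerivAt f L x)
    (hfx : f x = 0) (hL : L < 0) : ∀ᶠ t in 𝓝[>] x, f t < 0 := by
  have h := aux_eventually_pos_right (f := fun t => -f t) (hf.neg) (by simp [hfx])
    (by simpa using hL)
  filter_upwards [h] with t ht
  linarith

/-- If `f` is positive on `(a,b)`, vanishes at `b` and has a derivative there,
the derivative is nonpositive. -/
lemma aux_deriv_nonpos {f : ℝ → ℝ} {a b L : ℝ} (hab : a < b) (hf : HasDerivAt f L b)
    (hfb : f b = 0) (hpos : ∀ t ∈ Ioo a b, 0 < f t) : L ≤ 0 := by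
  have hslope : Tendsto (slope f b) (𝓝[≠] b) (𝓝 L) := hasDerivAt_iff_tendsto_slope.1 hf
  have hmono : 𝓝[<] b ≤ 𝓝[≠] b := nhdsWithin_mono b fun t ht => ne_of_lt ht
  refine le_of_tendsto (hslope.mono_left hmono) ?_
  filter_upwards [Ioo_mem_nhdsLT_of_mem ⟨hab, le_refl b⟩] with t ht
  rw [slope_def_field, hfb, sub_zero]
  exact div_nonpos_of_nonneg_of_nonpos (hpos t ht).le (by linarith [ht.2])

variable {p q m : ℝ → ℝ} {u u' : ℝ → ℝ → ℝ → ℝ}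

/-- Continuity of a section `t ↦ u a σ t`. -/
lemma aux_cont_t (hu : Continuous fun x : ℝ × ℝ × ℝ => u x.1 x.2.1 x.2.2) (a σ : ℝ) :
    Continuous (u a σ) :=
  hu.comp (continuous_const.prodMk (continuous_const.prodMk continuous_id))

/-- The Wronskian of two solutions (started at `s1` and `s2`) of the same equation
is constant. -/
lemma aux_wronskian_const (hsol : IsSolFamily p q m u u') (a s1 s2 t t' : ℝ) :
    p t * u' a s1 t * u a s2 t - u a s1 t * (p t * u' a s2 t)
      = p t' * u' a s1 t' * u a s2 t' - u a s1 t' * (p t' * u' a s2 t') := by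
  set W : ℝ → ℝ :=
    fun τ => p τ * u' a s1 τ * u a s2 τ - u a s1 τ * (p τ * u' a s2 τ) with hWdef
  have key : ∀ x, HasDerivAt W 0 x := by
    intro x
    obtain ⟨h1u, h1p⟩ := (hsol a s1).2.2 x
    obtain ⟨h2u, h2p⟩ := (hsol a s2).2.2 x
    have h := (h1p.mul h2u).sub (h1u.mul h2p)
    exact h.congr_deriv (by ring)
  have hd : Differentiable ℝ W := fun x => (key x).differentiableAt
  exact is_const_of_deriv_eq_zero hd (fun x => (key x).deriv) t t'

/-- Basic facts about the first zero `sInf (zeroSet u a σ)` when the zero set is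
nonempty: it lies strictly after `σ`, it is a zero, and `u a σ` is positive
strictly between `σ` and it. -/
lemma aux_first_zero (hppos : ∀ t, 0 < p t) (hsol : IsSolFamily p q m u u')
    (hu : Continuous fun x : ℝ × ℝ × ℝ => u x.1 x.2.1 x.2.2)
    (a σ : ℝ) (hne : (zeroSet u a σ).Nonempty) :
    σ < sInf (zeroSet u a σ) ∧ u a σ (sInf (zeroSet u a σ)) = 0 ∧
      ∀ t ∈ Ioo σ (sInf (zeroSet u a σ)), 0 < u a σ t := by
  obtain ⟨h0, h1, hode⟩ := hsol a σ
  have hcont : Continuous (u a σ) := aux_cont_t hu a σ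
  have hbdd : BddBelow (zeroSet u a σ) := ⟨σ, fun z hz => hz.1.le⟩
  set T := sInf (zeroSet u a σ) with hTdef
  -- eventual positivity just to the right of σ
  have hLpos : 0 < u' a σ σ := by rw [h1]; exact one_div_pos.2 (hppos σ)
  have hev : ∀ᶠ t in 𝓝[>] σ, 0 < u a σ t :=
    aux_eventually_pos_right ((hode σ).1) h0 hLpos
  obtain ⟨c, hc, hsub⟩ := mem_nhdsGT_iff_exists_Ioc_subset.1 hev
  -- σ < c ≤ T
  have hcT : c ≤ T := by
    refine le_csInf hne fun z hz => ?_
    by_contra h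
    push_neg at h
    have h2 : 0 < u a σ z := hsub ⟨hz.1, h.le⟩
    rw [hz.2] at h2
    exact lt_irrefl 0 h2
  have hσT : σ < T := lt_of_lt_of_le hc hcT
  -- u a σ T = 0
  have hT0 : u a σ T = 0 := by
    have hcl : T ∈ closure (zeroSet u a σ) := csInf_mem_closure hne hbdd
    have hclosed : IsClosed ({t : ℝ | σ ≤ t} ∩ (u a σ) ⁻¹' {0}) :=
      (isClosed_le continuous_const continuous_id).inter
        (isClosed_singleton.preimage hcont)
    have hsubC : zeroSet u a σ ⊆ {t : ℝ | σ ≤ t} ∩ (u a σ) ⁻¹' {0} :=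
      fun z hz => ⟨hz.1.le, hz.2⟩
    have := closure_minimal hsubC hclosed hcl
    exact this.2
  refine ⟨hσT, hT0, fun t ht => ?_⟩
  -- no zeros in (σ, T)
  have hne0 : ∀ r ∈ Ioo σ T, u a σ r ≠ 0 := by
    intro r hr h
    exact absurd (csInf_le hbdd ⟨hr.1, h⟩) (not_le.2 hr.2)
  -- sign via IVT
  by_contra hneg
  push_neg at hneg
  have hneg' : u a σ t < 0 := lt_of_le_of_ne hneg (hne0 t ht)
  set t1 := min c ((σ + t) / 2) with ht1def
  have ht1σ : σ < t1 := lt_min hc (by linarith [ht.1])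
  have ht1t : t1 < t := lt_of_le_of_lt (min_le_right _ _) (by linarith [ht.1])
  have ht1pos : 0 < u a σ t1 := hsub ⟨ht1σ, min_le_left _ _⟩
  have hiv : (0:ℝ) ∈ Icc (u a σ t) (u a σ t1) := ⟨hneg'.le, ht1pos.le⟩
  obtain ⟨r, hrmem, hr0⟩ := intermediate_value_Icc' ht1t.le (hcont.continuousOn) hiv
  exact hne0 r ⟨lt_of_lt_of_le ht1σ hrmem.1, lt_of_le_of_lt hrmem.2 ht.2⟩ hr0

end Aux

/-- On the domain `D = {(a,s) : φ_a(s) < +∞}` the partial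
derivative `∂φ_a(s)/∂s` is strictly positive. -/
theorem zero_function_partial_s_pos
    (p q m : ℝ → ℝ) (u u' : ℝ → ℝ → ℝ → ℝ)
    (hp : Continuous p) (hq : Continuous q) (hm : Continuous m)
    (hppos : ∀ t, 0 < p t) (hqnn : ∀ t, 0 ≤ q t)
    (hsol : IsSolFamily p q m u u')
    (hu : Continuous fun x : ℝ × ℝ × ℝ => u x.1 x.2.1 x.2.2)
    (hu' : Continuous fun x : ℝ × ℝ × ℝ => u' x.1 x.2.1 x.2.2) :
    ∀ a s : ℝ, (zeroSet u a s).Nonempty →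
      ∀ d : ℝ, HasDerivAt (fun σ => sInf (zeroSet u a σ)) d s → 0 < d := by
  intro a s hne d hd
  obtain ⟨hsT, huT, hupos⟩ := aux_first_zero hppos hsol hu a s hne
  set T := sInf (zeroSet u a s) with hTdef
  -- derivative of u a s at T is strictly negative
  have hderT : HasDerivAt (u a s) (u' a s T) T := ((hsol a s).2.2 T).1
  have hderT_le : u' a s T ≤ 0 := aux_deriv_nonpos hsT hderT huT hupos
  -- the Wronskian relation: for any σ, p T * u' a s T * u a σ T = - u a s σ
  have hWr : ∀ σ : ℝ, p T * u' a s T * u a σ T = - u a s σ := by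
    intro σ
    have hW := aux_wronskian_const hsol a s σ T σ
    rw [huT, (hsol a σ).1, (hsol a σ).2.1] at hW
    have hpσ : p σ ≠ 0 := (hppos σ).ne'
    field_simp at hW
    linarith [hW]
  -- strict negativity
  have hσ₁ : (s + T) / 2 ∈ Ioo s T := ⟨by linarith, by linarith⟩
  have huσ₁ : 0 < u a s ((s + T) / 2) := hupos _ hσ₁
  have hderT_neg : u' a s T < 0 := by
    rcases hderT_le.lt_or_eq with h | h
    · exact h
    · exfalso
      have := hWr ((s + T) / 2)
      rw [h] at this
      simp at this
      linarith
  -- pick t₀ > T with u a s t₀ < 0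
  obtain ⟨t₀, hut₀, ht₀T⟩ :=
    ((aux_eventually_neg_right hderT huT hderT_neg).and self_mem_nhdsWithin).exists
  have ht₀T : T < t₀ := ht₀T
  -- uniform bound on |u' a σ t| for (σ, t) in a compact box
  obtain ⟨M, hM⟩ :=
    (IsCompact.exists_bound_of_continuousOn
      ((isCompact_Icc (a := s) (b := T)).prod (isCompact_Icc (a := T) (b := t₀)))
      (Continuous.continuousOn (f := fun x : ℝ × ℝ => u' a x.1 x.2)
        (hu'.comp (continuous_const.prodMk
          ((continuous_fst).prodMk continuous_snd)))))
  set M' : ℝ := max M 1 with hM'def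
  have hM'pos : (0:ℝ) < M' := lt_of_lt_of_le one_pos (le_max_right _ _)
  have hMbound : ∀ σ t : ℝ, σ ∈ Icc s T → t ∈ Icc T t₀ → |u' a σ t| ≤ M' := by
    intro σ t hσ ht
    calc |u' a σ t| ≤ M := by
          have := hM (σ, t) (mem_prod.2 ⟨hσ, ht⟩)
          simpa [Real.norm_eq_abs] using this
      _ ≤ M' := le_max_left _ _
  -- the constant A
  set A : ℝ := 1 / (p T * (-(u' a s T))) with hAdef
  have hApos : 0 < A := by
    apply one_div_pos.2
    exact mul_pos (hppos T) (by linarith)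
  -- for each σ, u a σ T = A * u a s σ
  have huσT : ∀ σ : ℝ, u a σ T = A * u a s σ := by
    intro σ
    have h := hWr σ
    have hpT : p T * -u' a s T ≠ 0 := (mul_pos (hppos T) (by linarith)).ne'
    rw [hAdef, one_div, inv_mul_eq_div, eq_div_iff hpT]
    linear_combination -h
  -- the final constant
  set c : ℝ := A / (2 * p s * M') with hcdef
  have hcpos : 0 < c :=
    div_pos hApos (mul_pos (by linarith [hppos s]) hM'pos)
  -- lower bound on u a s σ for σ slightly right of s
  have hders : HasDerivAt (u a s) (u' a s s) s := ((hsol a s).2.2 s).1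
  have hlow : ∀ᶠ σ in 𝓝[>] s, (σ - s) / (2 * p s) ≤ u a s σ := by
    have hslope : Tendsto (slope (u a s) s) (𝓝[≠] s) (𝓝 (u' a s s)) :=
      hasDerivAt_iff_tendsto_slope.1 hders
    have hhalf : 1 / (2 * p s) < u' a s s := by
      rw [(hsol a s).2.1]
      rw [div_lt_div_iff₀ (by linarith [hppos s] : (0:ℝ) < 2 * p s) (hppos s)]
      nlinarith [hppos s]
    have hev : ∀ᶠ σ in 𝓝[≠] s, 1 / (2 * p s) < slope (u a s) s σ :=
      hslope.eventually (eventually_gt_nhds hhalf)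
    have hmono : 𝓝[>] s ≤ 𝓝[≠] s := nhdsWithin_mono s fun t ht => ne_of_gt ht
    filter_upwards [hev.filter_mono hmono, self_mem_nhdsWithin] with σ hσ hσs
    have hσs' : (0:ℝ) < σ - s := sub_pos.2 hσs
    rw [slope_def_field, (hsol a s).1, sub_zero] at hσ
    have hps : 0 < p s := hppos s
    have h2 := (div_lt_div_iff₀ (by linarith : (0:ℝ) < 2 * p s) hσs').1 hσ
    rw [div_le_iff₀ (by linarith : (0:ℝ) < 2 * p s)]
    linarith
  -- eventual negativity of u a σ t₀ for σ near s
  have hcσt₀ : Continuous fun σ => u a σ t₀ :=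
    hu.comp (continuous_const.prodMk (continuous_id.prodMk continuous_const))
  have hnegt₀ : ∀ᶠ σ in 𝓝[>] s, u a σ t₀ < 0 := by
    have : ∀ᶠ σ in 𝓝 s, u a σ t₀ < 0 :=
      (hcσt₀.tendsto s).eventually (eventually_lt_nhds hut₀)
    exact this.filter_mono nhdsWithin_le_nhds
  -- main eventual estimate on the slope of φ
  have hmain : ∀ᶠ σ in 𝓝[>] s,
      c ≤ slope (fun σ => sInf (zeroSet u a σ)) s σ := by
    filter_upwards [Ioo_mem_nhdsGT_of_mem ⟨le_refl s, hsT⟩, hlow, hnegt₀]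
      with σ hσIoo hσlow hσt₀
    have hσs : s < σ := hσIoo.1
    have hσT : σ < T := hσIoo.2
    have husσ : 0 < u a s σ := hupos σ ⟨hσs, hσT⟩
    have huσTpos : 0 < u a σ T := by
      rw [huσT σ]; exact mul_pos hApos husσ
    -- zero set of u a σ is nonempty
    have hcontσ : Continuous (u a σ) := aux_cont_t hu a σ
    have hiv : (0:ℝ) ∈ Icc (u a σ t₀) (u a σ T) := ⟨hσt₀.le, huσTpos.le⟩
    obtain ⟨r, hrmem, hr0⟩ := intermediate_value_Icc' ht₀T.le hcontσ.continuousOn hiv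
    have hrT : T < r := by
      rcases lt_or_eq_of_le hrmem.1 with h | h
      · exact h
      · exfalso; rw [← h] at hr0; linarith
    have hneσ : (zeroSet u a σ).Nonempty := ⟨r, lt_trans hσT hrT, hr0⟩
    obtain ⟨hφσ, hφ0, hφpos⟩ := aux_first_zero hppos hsol hu a σ hneσ
    set φσ := sInf (zeroSet u a σ) with hφdef
    have hbddσ : BddBelow (zeroSet u a σ) := ⟨σ, fun z hz => hz.1.le⟩
    have hφr : φσ ≤ r := csInf_le hbddσ ⟨lt_trans hσT hrT, hr0⟩
    have hφt₀ : φσ ≤ t₀ := le_trans hφr hrmem.2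
    -- φσ > T
    have hφT : T < φσ := by
      rcases lt_trichotomy φσ T with h | h | h
      · exfalso
        -- φσ ∈ (σ, T): contradiction via Wronskian
        have hderφ : HasDerivAt (u a σ) (u' a σ φσ) φσ := ((hsol a σ).2.2 φσ).1
        have hd0 : u' a σ φσ ≤ 0 := aux_deriv_nonpos hφσ hderφ hφ0 hφpos
        have hW := aux_wronskian_const hsol a s σ φσ σ
        rw [hφ0, (hsol a σ).1, (hsol a σ).2.1] at hW
        have hpσ : p σ ≠ 0 := (hppos σ).ne'
        field_simp at hW
        -- hW : u a s φσ * (p φσ * u' a σ φσ) = u a s σ  (up to sign arrangement)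
        have husφ : 0 < u a s φσ := hupos φσ ⟨lt_trans hσs hφσ, h⟩
        nlinarith [hppos φσ, mul_nonneg (mul_nonneg husφ.le (hppos φσ).le) (neg_nonneg.2 hd0)]
      · exfalso; rw [h] at hφ0; linarith
      · exact h
    -- MVT on [T, φσ]
    have hdiff : ∀ x ∈ Ioo T φσ, HasDerivAt (u a σ) (u' a σ x) x :=
      fun x _ => ((hsol a σ).2.2 x).1
    obtain ⟨ξ, hξ, hξeq⟩ := exists_hasDerivAt_eq_slope (u a σ) (u' a σ) hφT
      hcontσ.continuousOn hdiff
    rw [hφ0, huσT σ, zero_sub] at hξeq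
    -- bound: A * u a s σ ≤ M' * (φσ - T)
    have hξbound : |u' a σ ξ| ≤ M' :=
      hMbound σ ξ ⟨hσs.le, hσT.le⟩ ⟨hξ.1.le, le_trans hξ.2.le hφt₀⟩
    have hkey : A * u a s σ ≤ M' * (φσ - T) := by
      have h1 : A * u a s σ / (φσ - T) = -(u' a σ ξ) := by
        rw [hξeq]; ring
      have h2 : -(u' a σ ξ) ≤ M' := le_trans (neg_le_abs _) hξbound
      have h3 : A * u a s σ / (φσ - T) ≤ M' := h1 ▸ h2
      calc A * u a s σ = A * u a s σ / (φσ - T) * (φσ - T) :=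
            (div_mul_cancel₀ _ (by linarith : φσ - T ≠ 0)).symm
        _ ≤ M' * (φσ - T) := mul_le_mul_of_nonneg_right h3 (by linarith)
    -- conclude the slope bound
    have h8 : A * ((σ - s) / (2 * p s)) ≤ A * u a s σ :=
      mul_le_mul_of_nonneg_left hσlow hApos.le
    have h9 : A * ((σ - s) / (2 * p s)) ≤ M' * (φσ - T) := le_trans h8 hkey
    have h10 : c * (σ - s) ≤ φσ - T := by
      have hps := hppos s
      have h2ps : (0:ℝ) < 2 * p s := by linarith
      rw [hcdef]
      rw [div_mul_eq_mul_div, div_le_iff₀ (mul_pos h2ps hM'pos)]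
      calc A * (σ - s) = A * ((σ - s) / (2 * p s) * (2 * p s)) := by
            rw [div_mul_cancel₀ _ (ne_of_gt h2ps)]
        _ = A * ((σ - s) / (2 * p s)) * (2 * p s) := by ring
        _ ≤ M' * (φσ - T) * (2 * p s) :=
            mul_le_mul_of_nonneg_right h9 (by linarith)
        _ = (φσ - T) * (2 * p s * M') := by ring
    rw [slope_def_field]
    rw [← hTdef]
    rw [le_div_iff₀ (by linarith : (0:ℝ) < σ - s)]
    linarith
  -- conclude d ≥ c > 0
  have hslope : Tendsto (slope (fun σ => sInf (zeroSet u a σ)) s) (𝓝[≠] s) (𝓝 d) :=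
    hasDerivAt_iff_tendsto_slope.1 hd
  have hmono : 𝓝[>] s ≤ 𝓝[≠] s := nhdsWithin_mono s fun t ht => ne_of_gt ht
  have : c ≤ d := ge_of_tendsto (hslope.mono_left hmono) hmain
  linarith
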